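/- For 0 < α < 1, f.p.∫_0^∞ x^{α-2} e^{-x} dx = −Γ(α)/(1-α) = Γ(α-1). -/

import Mathlib

open MeasureTheory Real Set Filter Topology

theorem stmt_12 (α : ℝ) (hα0 : 0 < α) (hα1 : α < 1) :
    Tendsto (fun e : ℝ =>
        (∫ x in Ioi e, x ^ (α - 2) * Real.exp (-x)) - e ^ (α - 1) / (1 - α))
      (𝓝[>] 0) (𝓝 (-Real.Gamma α / (1 - α))) ∧
    -Real.Gamma α / (1 - α) = Real.Gamma (α - 1) := by
  have hne : α - 1 ≠ 0 := by linarith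
  have hGadd : Real.Gamma α = (α - 1) * Real.Gamma (α - 1) := by
    have := Real.Gamma_add_one hne
    simpa using this
  constructor
  · -- integrability of x^s * exp (-x) on (e, ∞) for e > 0
    have hint : ∀ (s e : ℝ), 0 < e →
        IntegrableOn (fun x : ℝ => x ^ s * Real.exp (-x)) (Ioi e) := by
      intro s e he
      refine integrable_of_isBigO_exp_neg (b := 1/2) one_half_pos ?_ ?_
      · exact (continuousOn_id.rpow_const fun x hx => Or.inl (he.trans_le hx).ne').mul
          continuousOn_id.neg.rexp
      · exact (Real.Gamma_integrand_isLittleO s).isBigO.congr_left fun x => mul_comm _ _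
    -- key integration by parts identity
    have key : ∀ e : ℝ, 0 < e → (∫ x in Ioi e, x ^ (α - 2) * Real.exp (-x)) =
        (∫ x in Ioi e, x ^ (α - 1) * Real.exp (-x)) / (α - 1)
          - e ^ (α - 1) * Real.exp (-e) / (α - 1) := by
      intro e he
      have hderiv : ∀ x ∈ Ioi e, HasDerivAt (fun x : ℝ => x ^ (α - 1) * Real.exp (-x) / (α - 1))
          (x ^ (α - 2) * Real.exp (-x) - x ^ (α - 1) * Real.exp (-x) / (α - 1)) x := by
        intro x hx
        have hx0 : x ≠ 0 := (he.trans hx).ne'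
        have h1 : HasDerivAt (fun x : ℝ => x ^ (α - 1)) ((α - 1) * x ^ (α - 2)) x := by
          have := Real.hasDerivAt_rpow_const (p := α - 1) (Or.inl hx0)
          convert this using 2
          ring
        have h2 : HasDerivAt (fun x : ℝ => Real.exp (-x)) (-Real.exp (-x)) x := by
          simpa [Function.comp_def] using (Real.hasDerivAt_exp (-x)).comp x (hasDerivAt_neg x)
        have h3 := (h1.mul h2).div_const (α - 1)
        refine h3.congr_deriv ?_
        field_simp
        ring
      have htop : Tendsto (fun x : ℝ => x ^ (α - 1) * Real.exp (-x) / (α - 1)) atTop (𝓝 0) := by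
        have h0 : Tendsto (fun x : ℝ => Real.exp (-(1/2) * x)) atTop (𝓝 0) := by
          refine Real.tendsto_exp_atBot.comp ?_
          exact tendsto_id.const_mul_atTop_of_neg (by norm_num)
        have h1 : Tendsto (fun x : ℝ => Real.exp (-x) * x ^ (α - 1)) atTop (𝓝 0) :=
          (Real.Gamma_integrand_isLittleO (α - 1)).isBigO.trans_tendsto h0
        have := h1.div_const (α - 1)
        simpa [mul_comm, zero_div] using this
      have h2int := hint (α - 2) e he
      have h1int := hint (α - 1) e he
      have f'int : IntegrableOn
          (fun x : ℝ => x ^ (α - 2) * Real.exp (-x) - x ^ (α - 1) * Real.exp (-x) / (α - 1))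
          (Ioi e) := h2int.sub (h1int.div_const _)
      have hcont : ContinuousWithinAt (fun x : ℝ => x ^ (α - 1) * Real.exp (-x) / (α - 1))
          (Ici e) e := by
        refine ContinuousAt.continuousWithinAt ?_
        exact ((Real.continuousAt_rpow_const e (α - 1) (Or.inl he.ne')).mul
          ((Real.continuous_exp.comp continuous_neg).continuousAt)).div_const _
      have heq := integral_Ioi_of_hasDerivAt_of_tendsto hcont hderiv f'int htop
      rw [integral_sub h2int (h1int.div_const _), integral_div] at heq
      linarith [heq]
    -- integrability of x^(α-1) exp(-x) on (0,∞)
    have hg : IntegrableOn (fun x : ℝ => x ^ (α - 1) * Real.exp (-x)) (Ioi 0) :=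
      (Real.GammaIntegral_convergent hα0).congr_fun (fun x _ => mul_comm _ _) measurableSet_Ioi
    have hGamma : Real.Gamma α = ∫ x in Ioi 0, x ^ (α - 1) * Real.exp (-x) := by
      rw [Real.Gamma_eq_integral hα0]
      exact setIntegral_congr_fun measurableSet_Ioi fun x hx => mul_comm _ _
    -- the small-interval integral tends to 0
    have hsmall : Tendsto (fun e : ℝ => ∫ x in Ioc 0 e, x ^ (α - 1) * Real.exp (-x))
        (𝓝[>] 0) (𝓝 0) := by
      have hbound : ∀ e : ℝ, 0 < e →
          (∫ x in Ioc 0 e, x ^ (α - 1) * Real.exp (-x)) ≤ e ^ α / α := by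
        intro e he
        have hInt1 : IntegrableOn (fun x : ℝ => x ^ (α - 1)) (Ioc 0 e) := by
          rw [← intervalIntegrable_iff_integrableOn_Ioc_of_le he.le]
          exact intervalIntegral.intervalIntegrable_rpow' (by linarith)
        have hInt2 : IntegrableOn (fun x : ℝ => x ^ (α - 1) * Real.exp (-x)) (Ioc 0 e) :=
          hg.mono_set (Ioc_subset_Ioi_self)
        have h1 : (∫ x in Ioc 0 e, x ^ (α - 1) * Real.exp (-x)) ≤
            ∫ x in Ioc 0 e, x ^ (α - 1) := by
          refine setIntegral_mono_on hInt2 hInt1 measurableSet_Ioc fun x hx => ?_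
          have hx0 : 0 < x := hx.1
          nlinarith [Real.exp_le_one_iff.mpr (neg_nonpos.mpr hx0.le),
            Real.rpow_pos_of_pos hx0 (α - 1), Real.exp_pos (-x)]
        have h2 : (∫ x in Ioc 0 e, (x : ℝ) ^ (α - 1)) = e ^ α / α := by
          rw [← intervalIntegral.integral_of_le he.le,
            integral_rpow (Or.inl (by linarith : (-1:ℝ) < α - 1))]
          rw [Real.zero_rpow (by linarith : α - 1 + 1 ≠ 0)]
          norm_num
        linarith
      have hpos : ∀ e : ℝ, 0 < e → 0 ≤ ∫ x in Ioc 0 e, x ^ (α - 1) * Real.exp (-x) := by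
        intro e he
        refine setIntegral_nonneg measurableSet_Ioc fun x hx => ?_
        rcases hx with ⟨hx1, _⟩
        positivity
      have hrp : Tendsto (fun e : ℝ => e ^ α / α) (𝓝[>] 0) (𝓝 0) := by
        have : Tendsto (fun e : ℝ => e ^ α) (𝓝 0) (𝓝 ((0:ℝ) ^ α)) :=
          (Real.continuousAt_rpow_const 0 α (Or.inr hα0.le)).tendsto
        rw [Real.zero_rpow hα0.ne'] at this
        have := this.div_const α
        rw [zero_div] at this
        exact this.mono_left nhdsWithin_le_nhds
      refine squeeze_zero' ?_ ?_ hrp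
      · filter_upwards [self_mem_nhdsWithin] with e he using hpos e he
      · filter_upwards [self_mem_nhdsWithin] with e he using hbound e he
    -- the tail integral tends to Γ(α)
    have htail : Tendsto (fun e : ℝ => ∫ x in Ioi e, x ^ (α - 1) * Real.exp (-x))
        (𝓝[>] 0) (𝓝 (Real.Gamma α)) := by
      have hsplit : ∀ e : ℝ, 0 < e →
          (∫ x in Ioi e, x ^ (α - 1) * Real.exp (-x)) =
            (∫ x in Ioi 0, x ^ (α - 1) * Real.exp (-x))
              - ∫ x in Ioc 0 e, x ^ (α - 1) * Real.exp (-x) := by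
        intro e he
        have := setIntegral_union (Ioc_disjoint_Ioi (le_refl e)) measurableSet_Ioi
          (hg.mono_set Ioc_subset_Ioi_self) (hg.mono_set (Ioi_subset_Ioi he.le))
          (f := fun x : ℝ => x ^ (α - 1) * Real.exp (-x)) (μ := volume)
        rw [Ioc_union_Ioi_eq_Ioi he.le] at this
        rw [this]; ring
      have h := (tendsto_const_nhds (x := ∫ x in Ioi 0, x ^ (α - 1) * Real.exp (-x))
        (f := 𝓝[>] (0:ℝ))).sub hsmall
      rw [sub_zero] at h
      rw [hGamma]
      refine h.congr' ?_
      filter_upwards [self_mem_nhdsWithin] with e he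
      exact (hsplit e he).symm
    -- the boundary term tends to 0
    have hbdry : Tendsto (fun e : ℝ => e ^ (α - 1) * (1 - Real.exp (-e)) / (α - 1))
        (𝓝[>] 0) (𝓝 0) := by
      have hsq : Tendsto (fun e : ℝ => e ^ (α - 1) * (1 - Real.exp (-e))) (𝓝[>] 0) (𝓝 0) := by
        have hrp : Tendsto (fun e : ℝ => e ^ α) (𝓝[>] 0) (𝓝 0) := by
          have : Tendsto (fun e : ℝ => e ^ α) (𝓝 0) (𝓝 ((0:ℝ) ^ α)) :=
            (Real.continuousAt_rpow_const 0 α (Or.inr hα0.le)).tendsto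
          rw [Real.zero_rpow hα0.ne'] at this
          exact this.mono_left nhdsWithin_le_nhds
        refine squeeze_zero' ?_ ?_ hrp
        · filter_upwards [self_mem_nhdsWithin] with e (he : 0 < e)
          have h1 : Real.exp (-e) ≤ 1 := Real.exp_le_one_iff.mpr (by linarith)
          have h2 : 0 < e ^ (α - 1) := Real.rpow_pos_of_pos he _
          nlinarith
        · filter_upwards [self_mem_nhdsWithin] with e (he : 0 < e)
          have h1 : 1 - Real.exp (-e) ≤ e := by nlinarith [Real.add_one_le_exp (-e)]
          have h2 : 0 < e ^ (α - 1) := Real.rpow_pos_of_pos he _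
          have h3 : e ^ (α - 1) * e = e ^ α := by
            rw [← Real.rpow_add_one he.ne']
            norm_num
          nlinarith
      have := hsq.div_const (α - 1)
      simpa using this
    -- combine
    have hmain : Tendsto (fun e : ℝ =>
        (∫ x in Ioi e, x ^ (α - 1) * Real.exp (-x)) / (α - 1)
          + e ^ (α - 1) * (1 - Real.exp (-e)) / (α - 1))
        (𝓝[>] 0) (𝓝 (Real.Gamma α / (α - 1) + 0)) :=
      (htail.div_const (α - 1)).add hbdry
    rw [add_zero] at hmain
    have hval : Real.Gamma α / (α - 1) = -Real.Gamma α / (1 - α) := by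
      rw [show (1 - α : ℝ) = -(α - 1) by ring, div_neg, neg_div, neg_neg]
    rw [hval] at hmain
    refine hmain.congr' ?_
    filter_upwards [self_mem_nhdsWithin] with e (he : 0 < e)
    rw [key e he]
    have h1ne : (1:ℝ) - α ≠ 0 := by linarith
    field_simp [hne, h1ne]
    ring
  · rw [hGadd, show (1 - α : ℝ) = -(α - 1) by ring, neg_div_neg_eq]
    exact mul_div_cancel_left₀ _ hne
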